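/- Let F : ℝ^d × P(ℝ^d) → ℝ be such that for each probability measure m the map x ↦ F(x, m) is differentiable with gradient ∇_x F(·, m). Assume F is strictly displacement monotone: for all probability measures m ≠ m' on ℝ^d with finite second moment and every coupling π of (m, m'), ∫ (x − x')·(∇_x F(x, m) − ∇_x F(x', m')) π(dx, dx') > 0. If m and m' are both mean field equilibria with finite second moment, then m = m'. -/

import Mathlib

open MeasureTheory

/-- The (topological) support of a measure: points all of whose open neighbourhoods
have positive measure. -/
def msupport {d : ℕ} (m : Measure (EuclideanSpace ℝ (Fin d))) :
    Set (EuclideanSpace ℝ (Fin d)) :=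
  {x | ∀ U : Set (EuclideanSpace ℝ (Fin d)), IsOpen U → x ∈ U → 0 < m U}

lemma compl_msupport_null {d : ℕ} (m : Measure (EuclideanSpace ℝ (Fin d))) :
    m (msupport m)ᶜ = 0 := by
  set X := EuclideanSpace ℝ (Fin d)
  have hb := TopologicalSpace.isBasis_countableBasis X
  have hcount := TopologicalSpace.countable_countableBasis X
  apply measure_mono_null (t := ⋃₀ {U ∈ TopologicalSpace.countableBasis X | m U = 0})
  · intro x hx
    change ¬ (∀ U : Set X, IsOpen U → x ∈ U → 0 < m U) at hx
    push_neg at hx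
    obtain ⟨U, hU, hxU, hpos⟩ := hx
    have hU0 : m U = 0 := by simpa using hpos
    obtain ⟨V, hV, hxV, hVU⟩ := hb.exists_subset_of_mem_open hxU hU
    exact ⟨V, ⟨hV, measure_mono_null hVU hU0⟩, hxV⟩
  · exact measure_sUnion_null_iff (hcount.mono (Set.sep_subset _ _)) |>.2
      fun U hU => hU.2

/-- Strict displacement monotonicity of `F` implies uniqueness of the
mean field equilibrium (among equilibria with finite second moment). -/
theorem stmt10 {d : ℕ}
    (F : EuclideanSpace ℝ (Fin d) → Measure (EuclideanSpace ℝ (Fin d)) → ℝ)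
    (G : EuclideanSpace ℝ (Fin d) → Measure (EuclideanSpace ℝ (Fin d)) →
      EuclideanSpace ℝ (Fin d))
    (hgrad : ∀ (μ : Measure (EuclideanSpace ℝ (Fin d))) (x : EuclideanSpace ℝ (Fin d)),
      HasGradientAt (fun z => F z μ) (G x μ) x)
    (hmono : ∀ μ μ' : Measure (EuclideanSpace ℝ (Fin d)),
      IsProbabilityMeasure μ → IsProbabilityMeasure μ' →
      Integrable (fun x => ‖x‖ ^ 2) μ → Integrable (fun x => ‖x‖ ^ 2) μ' → μ ≠ μ' →
      ∀ π : Measure (EuclideanSpace ℝ (Fin d) × EuclideanSpace ℝ (Fin d)),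
        IsProbabilityMeasure π → π.map Prod.fst = μ → π.map Prod.snd = μ' →
        (0 : ℝ) < ∫ p, (inner ℝ (p.1 - p.2) (G p.1 μ - G p.2 μ') : ℝ) ∂π)
    (m m' : Measure (EuclideanSpace ℝ (Fin d)))
    [IsProbabilityMeasure m] [IsProbabilityMeasure m']
    (hm2 : Integrable (fun x => ‖x‖ ^ 2) m) (hm'2 : Integrable (fun x => ‖x‖ ^ 2) m')
    (hMFE : msupport m = {x | ∀ y, F x m ≤ F y m})
    (hMFE' : msupport m' = {x | ∀ y, F x m' ≤ F y m'}) :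
    m = m' := by
  by_contra hne
  -- gradients vanish on supports
  have key : ∀ (μ : Measure (EuclideanSpace ℝ (Fin d))),
      msupport μ = {x | ∀ y, F x μ ≤ F y μ} → ∀ x ∈ msupport μ, G x μ = 0 := by
    intro μ hμ x hx
    rw [hμ] at hx
    have hmin : IsLocalMin (fun z => F z μ) x := Filter.Eventually.of_forall hx
    have h0 := hmin.hasFDerivAt_eq_zero (hgrad μ x).hasFDerivAt
    have := (InnerProductSpace.toDual ℝ (EuclideanSpace ℝ (Fin d))).injective
      (by simpa using h0)
    simpa using this
  set π := m.prod m' with hπ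
  have hπp : IsProbabilityMeasure π := by infer_instance
  have hfst : π.map Prod.fst = m := by simp [hπ, Measure.map_fst_prod]
  have hsnd : π.map Prod.snd = m' := by simp [hπ, Measure.map_snd_prod]
  have hlt := hmono m m' inferInstance inferInstance hm2 hm'2 hne π hπp hfst hsnd
  have hnull : π ((msupport m) ×ˢ (msupport m'))ᶜ = 0 := by
    apply measure_mono_null (t := ((msupport m)ᶜ ×ˢ Set.univ) ∪ (Set.univ ×ˢ (msupport m')ᶜ))
    · intro p hp
      simp only [Set.mem_compl_iff, Set.mem_prod, not_and_or] at hp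
      rcases hp with h | h
      · exact Or.inl ⟨h, trivial⟩
      · exact Or.inr ⟨trivial, h⟩
    · apply measure_union_null
      · rw [hπ, Measure.prod_prod, compl_msupport_null]; simp
      · rw [hπ, Measure.prod_prod, compl_msupport_null]; simp
  have hae : ∀ᵐ p ∂π, (inner ℝ (p.1 - p.2) (G p.1 m - G p.2 m') : ℝ) = 0 := by
    rw [ae_iff]
    apply measure_mono_null _ hnull
    intro p hp
    simp only [Set.mem_setOf_eq] at hp
    simp only [Set.mem_compl_iff, Set.mem_prod, not_and_or]
    by_contra hcon
    push_neg at hcon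
    apply hp
    rw [key m hMFE p.1 hcon.1, key m' hMFE' p.2 hcon.2]
    simp
  rw [integral_eq_zero_of_ae hae] at hlt
  exact lt_irrefl 0 hlt
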